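/- Let L = {(i,k_1),...,(i,k_r)} be a star with common root i and k_1 < ... < k_r, with interaction cost matrices d_{i k_t}. For a threading fixing block i at position j and block k_r at position l (j ≤ l), the minimal total star cost v satisfies the recursion: v(L; r_i = j, r_{k_r} = l) = d_{i j k_r l} + min_{j ≤ s ≤ l} v(L'; r_i = j, r_{k_{r-1}} = s), where L' = L \ {(i,k_r)}. Consequently the matrix of optimal star costs equals (...((d_{i k_1} ⊗ d_{i k_2}) ⊗ ...) ⊗ d_{i k_r}), where (A ⊗ B)(j,l) = min_{j ≤ s ≤ l} A(j,s) + B(j,l). -/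

import Mathlib

/-- Position assignments for a star with `r+1` links rooted at a block placed at
position `j`: weakly increasing tuples `s` of positions with `j ≤ s 0` and last
entry fixed to `l`. -/
noncomputable def starAdmissible (n r : ℕ) (j l : Fin n) : Finset (Fin (r + 1) → Fin n) :=
  letI := Classical.decPred
    (fun s : Fin (r + 1) → Fin n => Monotone s ∧ j ≤ s 0 ∧ s (Fin.last r) = l)
  Finset.univ.filter (fun s => Monotone s ∧ j ≤ s 0 ∧ s (Fin.last r) = l)

/-- `v(L; r_i = j, r_{k_last} = l)`: the minimal total cost `∑_t d_t(j, s_t)` of the star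
over feasible assignments `j ≤ s_1 ≤ ... ≤ s_last = l` (`+∞` if none exists). -/
noncomputable def starCost (n r : ℕ) (d : Fin (r + 1) → Fin n → Fin n → WithTop ℝ)
    (j l : Fin n) : WithTop ℝ :=
  if h : (starAdmissible n r j l).Nonempty then
    (starAdmissible n r j l).inf' h (fun s => ∑ t, d t j (s t))
  else ⊤

/-- `(A ⊗ B)(j,l) = (min_{j ≤ s ≤ l} A(j,s)) + B(j,l)` (`+∞` if `j > l`). -/
noncomputable def otimesF (n : ℕ) (A B : Fin n → Fin n → WithTop ℝ) :
    Fin n → Fin n → WithTop ℝ :=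
  fun j l =>
    if h : j ≤ l then (Finset.Icc j l).inf' (Finset.nonempty_Icc.mpr h) (A j) + B j l
    else ⊤

/-- For a star `L = {(i,k_1),...,(i,k_r)}`, the optimal star costs satisfy the dynamic
programming recursion
`v(L; r_i = j, r_{k_r} = l) = d_{i j k_r l} + min_{j ≤ s ≤ l} v(L'; r_i = j, r_{k_{r-1}} = s)`
(where `L' = L \ {(i,k_r)}`), and consequently the matrix of optimal star costs equals the
left-to-right `⊗`-product `(...((d_{ik_1} ⊗ d_{ik_2}) ⊗ ...) ⊗ d_{ik_r}`. -/
lemma mem_starAdmissible {n r : ℕ} {j l : Fin n} {s : Fin (r + 1) → Fin n} :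
    s ∈ starAdmissible n r j l ↔ Monotone s ∧ j ≤ s 0 ∧ s (Fin.last r) = l := by
  classical
  simp [starAdmissible]

lemma starAdmissible_nonempty {n r : ℕ} {j l : Fin n} (h : j ≤ l) :
    (starAdmissible n r j l).Nonempty :=
  ⟨fun _ => l, mem_starAdmissible.mpr ⟨monotone_const, h, rfl⟩⟩

lemma starCost_eq_inf' {n r : ℕ} (d : Fin (r + 1) → Fin n → Fin n → WithTop ℝ)
    {j l : Fin n} (h : j ≤ l) :
    starCost n r d j l =
      (starAdmissible n r j l).inf' (starAdmissible_nonempty h)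
        (fun s => ∑ t, d t j (s t)) := by
  rw [starCost, dif_pos (starAdmissible_nonempty h)]

lemma starCost_zero {n : ℕ} (d : Fin 1 → Fin n → Fin n → WithTop ℝ)
    {j l : Fin n} (h : j ≤ l) : starCost n 0 d j l = d 0 j l := by
  have hset : starAdmissible n 0 j l = {fun _ => l} := by
    ext s
    simp only [mem_starAdmissible, Finset.mem_singleton]
    constructor
    · rintro ⟨-, -, h3⟩
      funext t
      have ht : t = Fin.last 0 := Fin.ext (by omega)
      rw [ht, h3]
    · rintro rfl
      exact ⟨monotone_const, h, rfl⟩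
  rw [starCost_eq_inf' d h]
  simp [hset]

lemma starCost_succ (n r : ℕ) (d : Fin (r + 2) → Fin n → Fin n → WithTop ℝ)
    (j l : Fin n) (hjl : j ≤ l) :
    starCost n (r + 1) d j l =
      d (Fin.last (r + 1)) j l +
        (Finset.Icc j l).inf' (Finset.nonempty_Icc.mpr hjl)
          (fun s => starCost n r (fun t => d t.castSucc) j s) := by
  apply le_antisymm
  · -- LHS ≤ RHS : pick minimizers on the right, build a snoc witness
    obtain ⟨s, hs, hval⟩ := Finset.exists_mem_eq_inf' (Finset.nonempty_Icc.mpr hjl)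
      (fun s => starCost n r (fun t => d t.castSucc) j s)
    rw [Finset.mem_Icc] at hs
    obtain ⟨hjs, hsl⟩ := hs
    obtain ⟨q, hq, hq2⟩ := Finset.exists_mem_eq_inf' (starAdmissible_nonempty (r := r) hjs)
      (fun q => ∑ t, d t.castSucc j (q t))
    rw [mem_starAdmissible] at hq
    obtain ⟨hqmono, hjq, hqlast⟩ := hq
    set p : Fin (r + 2) → Fin n := Fin.snoc q l with hp
    have hpmem : p ∈ starAdmissible n (r + 1) j l := by
      rw [mem_starAdmissible]
      refine ⟨?_, ?_, ?_⟩
      · rw [Fin.monotone_iff_le_succ]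
        intro i
        induction i using Fin.lastCases with
        | last =>
            rw [show p (Fin.last r).castSucc = q (Fin.last r) from Fin.snoc_castSucc _ _ _,
              hqlast, Fin.succ_last]
            simpa [hp] using hsl
        | cast i =>
            rw [show p i.castSucc.castSucc = q i.castSucc from Fin.snoc_castSucc _ _ _,
              Fin.succ_castSucc,
              show p i.succ.castSucc = q i.succ from Fin.snoc_castSucc _ _ _]
            exact hqmono (Fin.castSucc_le_succ i)
      · rw [show (0 : Fin (r + 2)) = (0 : Fin (r + 1)).castSucc from (Fin.castSucc_zero).symm,
          show p (0 : Fin (r + 1)).castSucc = q 0 from Fin.snoc_castSucc _ _ _]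
        exact hjq
      · exact Fin.snoc_last _ _
    have hsum : ∑ t, d t j (p t) =
        d (Fin.last (r + 1)) j l + ∑ t : Fin (r + 1), d t.castSucc j (q t) := by
      rw [Fin.sum_univ_castSucc (fun t => d t j (p t))]
      have h1 : p (Fin.last (r + 1)) = l := Fin.snoc_last _ _
      have h2 : ∀ t : Fin (r + 1), p t.castSucc = q t := fun t => Fin.snoc_castSucc _ _ _
      simp only [h1, h2]
      exact add_comm _ _
    calc starCost n (r + 1) d j l
        ≤ ∑ t, d t j (p t) := by
          rw [starCost_eq_inf' d hjl]
          exact Finset.inf'_le _ hpmem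
      _ = d (Fin.last (r + 1)) j l +
            (Finset.Icc j l).inf' (Finset.nonempty_Icc.mpr hjl)
              (fun s => starCost n r (fun t => d t.castSucc) j s) := by
          rw [hsum, hval, starCost_eq_inf' _ hjs, hq2]
  · -- RHS ≤ LHS : pick minimizer on the left, restrict it
    obtain ⟨p, hp, hval⟩ := Finset.exists_mem_eq_inf'
      (starAdmissible_nonempty (r := r + 1) hjl) (fun s => ∑ t, d t j (s t))
    rw [mem_starAdmissible] at hp
    obtain ⟨hpmono, hjp, hplast⟩ := hp
    set q : Fin (r + 1) → Fin n := fun t => p t.castSucc with hqdef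
    have hqmono : Monotone q := hpmono.comp Fin.strictMono_castSucc.monotone
    have hjq : j ≤ q 0 := by
      rw [hqdef]; simpa using hjp
    have hsl : q (Fin.last r) ≤ l := by
      rw [← hplast, hqdef]
      exact hpmono (Fin.le_last _)
    have hjs : j ≤ q (Fin.last r) := hjq.trans (hqmono (Fin.zero_le _))
    have hmem : q (Fin.last r) ∈ Finset.Icc j l := Finset.mem_Icc.mpr ⟨hjs, hsl⟩
    have hqmem : q ∈ starAdmissible n r j (q (Fin.last r)) :=
      mem_starAdmissible.mpr ⟨hqmono, hjq, rfl⟩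
    calc d (Fin.last (r + 1)) j l +
          (Finset.Icc j l).inf' (Finset.nonempty_Icc.mpr hjl)
            (fun s => starCost n r (fun t => d t.castSucc) j s)
        ≤ d (Fin.last (r + 1)) j l + starCost n r (fun t => d t.castSucc) j (q (Fin.last r)) :=
          add_le_add_right (Finset.inf'_le _ hmem) _
      _ ≤ d (Fin.last (r + 1)) j l + ∑ t : Fin (r + 1), d t.castSucc j (q t) := by
          rw [starCost_eq_inf' _ hjs]
          exact add_le_add_right (Finset.inf'_le _ hqmem) _
      _ = ∑ t, d t j (p t) := by
          rw [Fin.sum_univ_castSucc (fun t => d t j (p t)), hplast]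
          exact add_comm _ _
      _ = starCost n (r + 1) d j l := by rw [starCost_eq_inf' d hjl, hval]

lemma starCost_eq_foldl (n : ℕ) :
    ∀ (r : ℕ) (d : Fin (r + 1) → Fin n → Fin n → WithTop ℝ) (j l : Fin n), j ≤ l →
      starCost n r d j l =
        ((List.ofFn (fun t : Fin r => d t.succ)).foldl (otimesF n) (d 0)) j l := by
  intro r
  induction r with
  | zero =>
      intro d j l hjl
      simpa [List.ofFn_zero] using starCost_zero d hjl
  | succ r ih =>
      intro d j l hjl
      have hofn : (List.ofFn fun t : Fin (r + 1) => d t.succ) =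
          (List.ofFn fun t : Fin r => d t.succ.castSucc).concat (d (Fin.last (r + 1))) := by
        have := List.ofFn_succ' (fun t : Fin (r + 1) => d t.succ)
        simpa only [Fin.succ_castSucc, Fin.succ_last] using this
      have ih' : ∀ s : Fin n, j ≤ s → starCost n r (fun u => d u.castSucc) j s =
          ((List.ofFn fun t : Fin r => d t.succ.castSucc).foldl (otimesF n) (d 0)) j s := by
        intro s hs
        have h := ih (fun u => d u.castSucc) j s hs
        simpa only [Fin.castSucc_zero] using h
      rw [hofn, List.concat_eq_append, List.foldl_concat]
      rw [starCost_succ n r d j l hjl]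
      rw [otimesF, dif_pos hjl]
      rw [add_comm]
      congr 1
      refine Finset.inf'_congr _ rfl fun s hs => ?_
      rw [Finset.mem_Icc] at hs
      exact ih' s hs.1

theorem starCost_recursion_and_otimes (n r : ℕ)
    (d : Fin (r + 1) → Fin n → Fin n → WithTop ℝ) :
    (∀ (d' : Fin (r + 2) → Fin n → Fin n → WithTop ℝ) (j l : Fin n) (hjl : j ≤ l),
      starCost n (r + 1) d' j l =
        d' (Fin.last (r + 1)) j l +
          (Finset.Icc j l).inf' (Finset.nonempty_Icc.mpr hjl)
            (fun s => starCost n r (fun t => d' t.castSucc) j s)) ∧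
    (∀ j l : Fin n, j ≤ l →
      starCost n r d j l =
        ((List.ofFn (fun t : Fin r => d t.succ)).foldl (otimesF n) (d 0)) j l) := by
  exact ⟨fun d' j l hjl => starCost_succ n r d' j l hjl, fun j l h => starCost_eq_foldl n r d j l h⟩
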